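/- (Template descent inequality for DS-OptMD.) Let (X_t), (X_{t+1/2}) be DS-OptMD iterates in X with feedback (g_t) and positive nondecreasing learning rates (η_t). Then for every t ≥ 1 and every p ∈ X: η_{t+1} D(p, X_{t+1}) ≤ η_t D(p, X_t) − ⟨g_t, X_{t+1/2} − p⟩ + (η_{t+1} − η_t) D(p, X_1) + ⟨g_t − g_{t−1}, X_{t+1/2} − X_{t+1}⟩ − η_t D(X_{t+1}, X_{t+1/2}) − η_t D(X_{t+1/2}, X_t). -/

import Mathlib

open scoped RealInnerProductSpace
open Filter Finset Topology

noncomputable section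

/-- Bregman divergence of a regularizer `h` with gradient map `Gh`. -/
def breg {F : Type*} [NormedAddCommGroup F] [InnerProductSpace ℝ F]
    (h : F → ℝ) (Gh : F → F) (p x : F) : ℝ :=
  h p - h x - ⟪Gh x, p - x⟫

/-- `h` is a regularizer on `X`: a convex differentiable function with gradient map `Gh`
that is `1`-strongly convex on `X`. -/
structure IsRegularizer {F : Type*} [NormedAddCommGroup F] [InnerProductSpace ℝ F]
    (X : Set F) (h : F → ℝ) (Gh : F → F) : Prop where
  convex : ConvexOn ℝ Set.univ h
  grad : ∀ x : F, HasFDerivAt h (innerSL ℝ (Gh x)) x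
  strong : StrongConvexOn X 1 h

/-- DS-OptMD (dual-stabilized optimistic mirror descent) iterates: `Z t` is the base state
`X_t` and `W t` is the played action `X_{t+1/2}`, for feedback `g` (with `g 0 = 0`) and
positive nondecreasing learning rates `η`.  `X_{t+1/2}` minimizes
`p ↦ ⟨g_{t-1}, p⟩ + η_t D(p, X_t)` over `X` and `X_{t+1}` minimizes
`p ↦ ⟨g_t, p⟩ + η_t D(p, X_t) + (η_{t+1} - η_t) D(p, X_1)` over `X`. -/
structure IsDSOptMD {F : Type*} [NormedAddCommGroup F] [InnerProductSpace ℝ F]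
    (X : Set F) (h : F → ℝ) (Gh : F → F)
    (η : ℕ → ℝ) (g : ℕ → F) (Z W : ℕ → F) : Prop where
  g_zero : g 0 = 0
  eta_pos : ∀ t : ℕ, 1 ≤ t → 0 < η t
  eta_mono : ∀ t : ℕ, 1 ≤ t → η t ≤ η (t + 1)
  base_mem : ∀ t : ℕ, 1 ≤ t → Z t ∈ X
  lead_mem : ∀ t : ℕ, 1 ≤ t → W t ∈ X
  lead_min : ∀ t : ℕ, 1 ≤ t → ∀ p ∈ X,
    ⟪g (t - 1), W t⟫ + η t * breg h Gh (W t) (Z t)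
      ≤ ⟪g (t - 1), p⟫ + η t * breg h Gh p (Z t)
  base_min : ∀ t : ℕ, 1 ≤ t → ∀ p ∈ X,
    ⟪g t, Z (t + 1)⟫ + η t * breg h Gh (Z (t + 1)) (Z t)
        + (η (t + 1) - η t) * breg h Gh (Z (t + 1)) (Z 1)
      ≤ ⟪g t, p⟫ + η t * breg h Gh p (Z t) + (η (t + 1) - η t) * breg h Gh p (Z 1)


/-- derivative at 0 is nonneg when 0 is a min on [0,1]. -/
lemma deriv_nonneg_of_min (f : ℝ → ℝ) (f' : ℝ) (hd : HasDerivAt f f' 0)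
    (hmin : ∀ s ∈ Set.Ioc (0:ℝ) 1, f 0 ≤ f s) : 0 ≤ f' := by
  rw [hasDerivAt_iff_tendsto_slope] at hd
  have hle : 𝓝[>] (0:ℝ) ≤ 𝓝[≠] 0 := nhdsWithin_mono 0 (fun x hx => ne_of_gt hx)
  refine ge_of_tendsto (hd.mono_left hle) ?_
  filter_upwards [Ioc_mem_nhdsGT_of_mem (Set.mem_Ico.mpr ⟨le_refl 0, one_pos⟩)] with s hs
  rw [slope_def_field]
  exact div_nonneg (by linarith [hmin s hs]) (by linarith [hs.1])

/-- first-order optimality on a convex set. -/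
lemma foptim {F : Type*} [NormedAddCommGroup F] [InnerProductSpace ℝ F]
    {X : Set F} (hXcv : Convex ℝ X) {φ : F → ℝ} {L : F →L[ℝ] ℝ} {w : F}
    (hw : w ∈ X) (hd : HasFDerivAt φ L w) (hmin : ∀ q ∈ X, φ w ≤ φ q)
    {p : F} (hp : p ∈ X) : 0 ≤ L (p - w) := by
  have hcurve : ∀ s : ℝ, HasDerivAt (fun s : ℝ => w + s • (p - w)) (p - w) s := by
    intro s
    simpa using ((hasDerivAt_id s).smul_const (p - w)).const_add w
  have hf : HasDerivAt (fun s : ℝ => φ (w + s • (p - w))) (L (p - w)) 0 := by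
    have hd' : HasFDerivAt φ L (w + (0:ℝ) • (p - w)) := by simpa using hd
    have := hd'.comp_hasDerivAt (x := (0:ℝ)) (hcurve 0)
    simpa [Function.comp_def] using this
  refine deriv_nonneg_of_min _ _ hf ?_
  intro s hs
  simp only [zero_smul, add_zero]
  apply hmin
  have : w + s • (p - w) = (1 - s) • w + s • p := by module
  rw [this]
  exact hXcv hw hp (by linarith [hs.2]) (le_of_lt hs.1) (by ring)

lemma hasFDerivAt_breg {F : Type*} [NormedAddCommGroup F] [InnerProductSpace ℝ F]
    (h : F → ℝ) (Gh : F → F) (hgrad : ∀ x : F, HasFDerivAt h (innerSL ℝ (Gh x)) x)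
    (z x : F) :
    HasFDerivAt (fun p => breg h Gh p z) (innerSL ℝ (Gh x) - innerSL ℝ (Gh z)) x := by
  have h2 : HasFDerivAt (fun p : F => ⟪Gh z, p - z⟫) (innerSL ℝ (Gh z)) x := by
    have : (fun p : F => ⟪Gh z, p - z⟫) = fun p : F => innerSL ℝ (Gh z) p - ⟪Gh z, z⟫ := by
      funext p; simp [inner_sub_right]
    rw [this]
    exact (innerSL ℝ (Gh z)).hasFDerivAt.sub_const _
  exact ((hgrad x).sub_const (h z)).sub h2

/-- three-point identity, separated form -/
lemma breg_three {F : Type*} [NormedAddCommGroup F] [InnerProductSpace ℝ F]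
    (h : F → ℝ) (Gh : F → F) (p x y : F) :
    ⟪Gh x, p - x⟫ - ⟪Gh y, p - x⟫
      = breg h Gh p y - breg h Gh p x - breg h Gh x y := by
  simp only [breg, inner_sub_right]; ring

/-- gradient inequality for convex `h`: the Bregman divergence is nonnegative. -/
lemma breg_nonneg {F : Type*} [NormedAddCommGroup F] [InnerProductSpace ℝ F]
    (h : F → ℝ) (Gh : F → F) (hcv : ConvexOn ℝ Set.univ h)
    (hgrad : ∀ x : F, HasFDerivAt h (innerSL ℝ (Gh x)) x) (p x : F) :
    0 ≤ breg h Gh p x := by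
  have hcurve : HasDerivAt (fun s : ℝ => h (x + s • (p - x))) (⟪Gh x, p - x⟫) 0 := by
    have hc : HasDerivAt (fun s : ℝ => x + s • (p - x)) (p - x) 0 := by
      simpa using ((hasDerivAt_id (0:ℝ)).smul_const (p - x)).const_add x
    have hg' : HasFDerivAt h (innerSL ℝ (Gh x)) (x + (0:ℝ) • (p - x)) := by
      simpa using hgrad x
    have := hg'.comp_hasDerivAt (x := (0:ℝ)) hc
    simpa [Function.comp_def] using this
  have key : ⟪Gh x, p - x⟫ ≤ h p - h x := by
    have hf : HasDerivAt (fun s : ℝ => s * (h p - h x) - h (x + s • (p - x)))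
        ((h p - h x) - ⟪Gh x, p - x⟫) 0 := by
      simpa [Pi.sub_def] using ((hasDerivAt_id (0:ℝ)).mul_const (h p - h x)).sub hcurve
    have h0 : (0:ℝ) ≤ (h p - h x) - ⟪Gh x, p - x⟫ := by
      refine deriv_nonneg_of_min _ _ hf ?_
      intro s hs
      simp only [zero_smul, add_zero, zero_mul, zero_sub]
      have hmem : x + s • (p - x) = (1 - s) • x + s • p := by module
      have := hcv.2 (Set.mem_univ x) (Set.mem_univ p)
        (by linarith [hs.2] : (0:ℝ) ≤ 1 - s) (le_of_lt hs.1) (by ring : (1-s) + s = 1)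
      rw [hmem]
      simp only [smul_eq_mul] at this
      linarith
    linarith
  simp only [breg]; linarith

/-- Template descent inequality for DS-OptMD (Lemma 1, DS-OptMD case). -/
theorem dsoptmd_template_descent
    {F : Type*} [NormedAddCommGroup F] [InnerProductSpace ℝ F]
    (X : Set F) (hXne : X.Nonempty) (hXcl : IsClosed X) (hXcv : Convex ℝ X)
    (h : F → ℝ) (Gh : F → F) (hreg : IsRegularizer X h Gh)
    (η : ℕ → ℝ) (g : ℕ → F) (Z W : ℕ → F)
    (hrun : IsDSOptMD X h Gh η g Z W) :
    ∀ t : ℕ, 1 ≤ t → ∀ p ∈ X,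
      η (t + 1) * breg h Gh p (Z (t + 1))
        ≤ η t * breg h Gh p (Z t)
            - ⟪g t, W t - p⟫
            + (η (t + 1) - η t) * breg h Gh p (Z 1)
            + ⟪g t - g (t - 1), W t - Z (t + 1)⟫
            - η t * breg h Gh (Z (t + 1)) (W t)
            - η t * breg h Gh (W t) (Z t) := by
  intro t ht p hp
  have hgrad := hreg.grad
  -- first-order optimality for the Z-update at Z (t+1)
  have hdA : HasFDerivAt
      (fun q => ⟪g t, q⟫ + η t * breg h Gh q (Z t) + (η (t + 1) - η t) * breg h Gh q (Z 1))
      ((innerSL ℝ (g t))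
        + η t • (innerSL ℝ (Gh (Z (t+1))) - innerSL ℝ (Gh (Z t)))
        + (η (t + 1) - η t) • (innerSL ℝ (Gh (Z (t+1))) - innerSL ℝ (Gh (Z 1))))
      (Z (t+1)) := by
    exact (((innerSL ℝ (g t)).hasFDerivAt.add
      ((hasFDerivAt_breg h Gh hgrad (Z t) (Z (t+1))).const_mul (η t))).add
      ((hasFDerivAt_breg h Gh hgrad (Z 1) (Z (t+1))).const_mul (η (t + 1) - η t)))
  have A := foptim hXcv (hrun.base_mem (t+1) (by omega)) hdA
    (fun q hq => hrun.base_min t ht q hq) hp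
  -- first-order optimality for the W-update at W t, tested against Z (t+1)
  have hdB : HasFDerivAt
      (fun q => ⟪g (t-1), q⟫ + η t * breg h Gh q (Z t))
      ((innerSL ℝ (g (t-1)))
        + η t • (innerSL ℝ (Gh (W t)) - innerSL ℝ (Gh (Z t)))) (W t) := by
    exact (innerSL ℝ (g (t-1))).hasFDerivAt.add
      ((hasFDerivAt_breg h Gh hgrad (Z t) (W t)).const_mul (η t))
  have B := foptim hXcv (hrun.lead_mem t ht) hdB
    (fun q hq => hrun.lead_min t ht q hq) (hrun.base_mem (t+1) (by omega))
  simp only [ContinuousLinearMap.add_apply, ContinuousLinearMap.smul_apply,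
    ContinuousLinearMap.sub_apply, innerSL_apply_apply, smul_eq_mul] at A B
  rw [breg_three h Gh p (Z (t+1)) (Z t), breg_three h Gh p (Z (t+1)) (Z 1)] at A
  rw [breg_three h Gh (Z (t+1)) (W t) (Z t)] at B
  have C : 0 ≤ (η (t + 1) - η t) * breg h Gh (Z (t+1)) (Z 1) :=
    mul_nonneg (sub_nonneg.mpr (hrun.eta_mono t ht))
      (breg_nonneg h Gh hreg.convex hgrad _ _)
  simp only [inner_sub_left, inner_sub_right] at A B ⊢
  ring_nf at A B C ⊢
  linarith [A, B, C]
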